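/- arXiv:1408.0876 — 7 statements merged into one kernel-verified Lean document; each statement's English description precedes it below -/
import Mathlib

section
/- Let α > 2, 0 < r₀ < r, and let N₀ > 0, P > 0, ρ* ∈ (0,1) be reals and K ≥ 2. Define A = α·r₀^{2−α}, μ = (A − 2r^{2−α})/((α−2)r²), and for x ∈ (r₀, r) define μ̂(x) = (A − 2x^{2−α})/((α−2)r²). Define d₀ = ( r^{2−α} + (A − 2r^{2−α})(1−ρ*)N₀ / ( 2N₀ + 2ρ*(A − 2r^{2−α})(K−1)P/((α−2)r²) ) )^{−1/(α−2)}. Then the inner expression is strictly positive (so d₀ is well defined), and μ̂(d₀)·N₀ = ρ* · μ · ( (μ − μ̂(d₀))·(K−1)·P + N₀ ). In particular, the SINR-ratio lower bound μ̂(d₀)N₀ / ( μ((μ − μ̂(d₀))(K−1)P + N₀) ) of Theorem 1 equals exactly ρ*. -/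
/-- With `A = α·r₀^(2−α)`, `μ = (A − 2r^(2−α))/((α−2)r²)`,
`μ̂(x) = (A − 2x^(2−α))/((α−2)r²)`, and
`d₀ = (r^(2−α) + (A − 2r^(2−α))(1−ρ*)N₀ / (2N₀ + 2ρ*(A − 2r^(2−α))(K−1)P/((α−2)r²)))^(−1/(α−2))`,
the inner expression is strictly positive (so `d₀` is well defined) and
`μ̂(d₀)·N₀ = ρ*·μ·((μ − μ̂(d₀))·(K−1)·P + N₀)`; in particular the SINR-ratio lower
bound `μ̂(d₀)N₀/(μ((μ − μ̂(d₀))(K−1)P + N₀))` equals exactly `ρ*`. -/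
theorem stmt_9 (α r₀ r N₀ P ρstar K : ℝ)
    (hα : 2 < α) (hr₀ : 0 < r₀) (hr : r₀ < r) (hN₀ : 0 < N₀) (hP : 0 < P)
    (hρ : ρstar ∈ Set.Ioo (0 : ℝ) 1) (hK : 2 ≤ K)
    (A μ d₀ : ℝ) (μhat : ℝ → ℝ)
    (hA : A = α * r₀ ^ (2 - α))
    (hμ : μ = (A - 2 * r ^ (2 - α)) / ((α - 2) * r ^ 2))
    (hμhat : ∀ x, μhat x = (A - 2 * x ^ (2 - α)) / ((α - 2) * r ^ 2))
    (hd₀ : d₀ = (r ^ (2 - α) + (A - 2 * r ^ (2 - α)) * (1 - ρstar) * N₀ /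
        (2 * N₀ + 2 * ρstar * (A - 2 * r ^ (2 - α)) * (K - 1) * P /
          ((α - 2) * r ^ 2))) ^ (-(α - 2)⁻¹)) :
    0 < r ^ (2 - α) + (A - 2 * r ^ (2 - α)) * (1 - ρstar) * N₀ /
        (2 * N₀ + 2 * ρstar * (A - 2 * r ^ (2 - α)) * (K - 1) * P / ((α - 2) * r ^ 2)) ∧
    μhat d₀ * N₀ = ρstar * (μ * ((μ - μhat d₀) * (K - 1) * P + N₀)) ∧
    μhat d₀ * N₀ / (μ * ((μ - μhat d₀) * (K - 1) * P + N₀)) = ρstar := by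
  obtain ⟨hρ0, hρ1⟩ := hρ
  have hrpos : 0 < r := hr₀.trans hr
  have hs : 0 < r ^ (2 - α) := Real.rpow_pos_of_pos hrpos _
  have hC : 0 < (α - 2) * r ^ 2 := mul_pos (by linarith) (by positivity)
  -- B > 0
  have hss : r ^ (2 - α) < r₀ ^ (2 - α) := by
    apply Real.rpow_lt_rpow_of_neg hr₀ hr (by linarith)
  have hB : 0 < A - 2 * r ^ (2 - α) := by
    have : (α - 2) * r ^ (2 - α) < α * r₀ ^ (2 - α) - 2 * r ^ (2 - α) := by nlinarith
    nlinarith [mul_pos (sub_pos.mpr hα) hs]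
  have hD : 0 < 2 * N₀ + 2 * ρstar * (A - 2 * r ^ (2 - α)) * (K - 1) * P /
      ((α - 2) * r ^ 2) := by
    have h1 : 0 < 2 * ρstar * (A - 2 * r ^ (2 - α)) * (K - 1) * P := by
      have : (0:ℝ) < K - 1 := by linarith
      positivity
    positivity
  have hq : 0 < (A - 2 * r ^ (2 - α)) * (1 - ρstar) * N₀ /
      (2 * N₀ + 2 * ρstar * (A - 2 * r ^ (2 - α)) * (K - 1) * P / ((α - 2) * r ^ 2)) := by
    apply div_pos _ hD
    have : (0:ℝ) < 1 - ρstar := by linarith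
    positivity
  have hEpos : 0 < r ^ (2 - α) + (A - 2 * r ^ (2 - α)) * (1 - ρstar) * N₀ /
      (2 * N₀ + 2 * ρstar * (A - 2 * r ^ (2 - α)) * (K - 1) * P / ((α - 2) * r ^ 2)) :=
    add_pos hs hq
  have hE : d₀ ^ (2 - α) = r ^ (2 - α) + (A - 2 * r ^ (2 - α)) * (1 - ρstar) * N₀ /
      (2 * N₀ + 2 * ρstar * (A - 2 * r ^ (2 - α)) * (K - 1) * P / ((α - 2) * r ^ 2)) := by
    have hne : α - 2 ≠ 0 := by linarith
    rw [hd₀, ← Real.rpow_mul hEpos.le,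
      show -(α - 2)⁻¹ * (2 - α) = 1 by field_simp; ring, Real.rpow_one]
  set s := r ^ (2 - α) with hsdef
  have hM : 0 < 2 * N₀ * ((α - 2) * r ^ 2) + 2 * ρstar * (A - 2 * s) * (K - 1) * P := by
    have h1 : 0 < 2 * ρstar * (A - 2 * s) * (K - 1) * P := by
      have : (0:ℝ) < K - 1 := by linarith
      positivity
    positivity
  have hDeq : 2 * N₀ + 2 * ρstar * (A - 2 * s) * (K - 1) * P / ((α - 2) * r ^ 2)
      = (2 * N₀ * ((α - 2) * r ^ 2) + 2 * ρstar * (A - 2 * s) * (K - 1) * P) /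
        ((α - 2) * r ^ 2) := by
    rw [add_div, mul_div_cancel_right₀ _ hC.ne']
  have hE' : d₀ ^ (2 - α) = s + (A - 2 * s) * (1 - ρstar) * N₀ * ((α - 2) * r ^ 2) /
      (2 * N₀ * ((α - 2) * r ^ 2) + 2 * ρstar * (A - 2 * s) * (K - 1) * P) := by
    rw [hE, hDeq, div_div_eq_mul_div]
  have hμpos : 0 < μ := hμ ▸ div_pos hB hC
  have hsub : μ - μhat d₀ = 2 * ((A - 2 * s) * (1 - ρstar) * N₀ * ((α - 2) * r ^ 2) /
      (2 * N₀ * ((α - 2) * r ^ 2) + 2 * ρstar * (A - 2 * s) * (K - 1) * P)) /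
      ((α - 2) * r ^ 2) := by
    rw [hμ, hμhat, hE']; ring
  have hsubpos : 0 < μ - μhat d₀ := by
    rw [hsub]
    have h1 : (0:ℝ) < 1 - ρstar := by linarith
    positivity
  have hX : 0 < μ * ((μ - μhat d₀) * (K - 1) * P + N₀) := by
    apply mul_pos hμpos
    have : (0:ℝ) < K - 1 := by linarith
    positivity
  have h2 : μhat d₀ * N₀ = ρstar * (μ * ((μ - μhat d₀) * (K - 1) * P + N₀)) := by
    rw [hμhat, hμ, hE']
    have hne : α - 2 ≠ 0 := by linarith
    have hMne := hM.ne'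
    have hr0 : r ≠ 0 := hrpos.ne'
    generalize hMdef : 2 * N₀ * ((α - 2) * r ^ 2) + 2 * ρstar * (A - 2 * s) * (K - 1) * P = M at hMne ⊢
    field_simp
    subst hMdef
    ring
  exact ⟨hEpos, h2, by rw [h2]; exact mul_div_cancel_right₀ ρstar hX.ne'⟩
end

section
/- Let α > 2, r₀ > 0, N₀ > 0, P > 0, β_K > 0 and ρ* ∈ (0,1) be reals. For r > r₀ define d₀(r) = ( r^{2−α} + (α·r₀^{2−α} − 2r^{2−α})(1−ρ*)N₀ / ( 2N₀ + 2ρ*(α·r₀^{2−α} − 2r^{2−α})·π·β_K·P/(α−2) ) )^{−1/(α−2)}, i.e. the threshold of equation (18) with K−1 = π·β_K·r². Then as r → ∞, d₀(r) converges to the finite positive limit ( (2N₀(α−2) + 2α·r₀^{2−α}·ρ*·π·β_K·P) / (α·r₀^{2−α}·N₀·(1−ρ*)·(α−2)) )^{1/(α−2)}. -/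
open Filter

/-- With `d₀(r)` the threshold of equation (18) with `K − 1 = π·β_K·r²`,
as `r → ∞` the threshold `d₀(r)` converges to the finite positive limit
`((2N₀(α−2) + 2α·r₀^(2−α)·ρ*·π·β_K·P) / (α·r₀^(2−α)·N₀·(1−ρ*)·(α−2)))^(1/(α−2))`. -/
theorem stmt_10 (α r₀ N₀ P βK ρstar L : ℝ)
    (hα : 2 < α) (hr₀ : 0 < r₀) (hN₀ : 0 < N₀) (hP : 0 < P) (hβ : 0 < βK)
    (hρ : ρstar ∈ Set.Ioo (0 : ℝ) 1)
    (hL : L = ((2 * N₀ * (α - 2) + 2 * α * r₀ ^ (2 - α) * ρstar * Real.pi * βK * P) /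
        (α * r₀ ^ (2 - α) * N₀ * (1 - ρstar) * (α - 2))) ^ (α - 2)⁻¹) :
    0 < L ∧
    Tendsto (fun r : ℝ =>
        (r ^ (2 - α) + (α * r₀ ^ (2 - α) - 2 * r ^ (2 - α)) * (1 - ρstar) * N₀ /
            (2 * N₀ + 2 * ρstar * (α * r₀ ^ (2 - α) - 2 * r ^ (2 - α)) *
              Real.pi * βK * P / (α - 2))) ^ (-(α - 2)⁻¹))
      atTop (nhds L) := by
  obtain ⟨hρ0, hρ1⟩ := hρ
  have hα2 : (0:ℝ) < α - 2 := by linarith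
  have hπ := Real.pi_pos
  have hρ1' : 0 < 1 - ρstar := by linarith
  set c : ℝ := α * r₀ ^ (2 - α) with hcdef
  have hc : 0 < c := by positivity
  -- numerator / denominator of the limit base
  have hB : 0 < 2 * N₀ * (α - 2) + 2 * α * r₀ ^ (2 - α) * ρstar * Real.pi * βK * P := by
    positivity
  have hC : 0 < α * r₀ ^ (2 - α) * N₀ * (1 - ρstar) * (α - 2) := by positivity
  have hL0 : 0 < L := by
    rw [hL]; exact Real.rpow_pos_of_pos (div_pos hB hC) _
  refine ⟨hL0, ?_⟩
  set D : ℝ := 2 * N₀ + 2 * ρstar * c * Real.pi * βK * P / (α - 2) with hDdef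
  have hD : 0 < D := by positivity
  set A : ℝ := c * (1 - ρstar) * N₀ / D with hAdef
  have hA : 0 < A := by positivity
  -- r ^ (2 - α) → 0
  have ht : Tendsto (fun r : ℝ => r ^ (2 - α)) atTop (nhds 0) := by
    have := tendsto_rpow_neg_atTop hα2
    simpa [show -(α - 2) = 2 - α by ring] using this
  -- continuity of the inner expression as a function of s = r^(2-α)
  have hg : Tendsto
      (fun s : ℝ => s + (c - 2 * s) * (1 - ρstar) * N₀ /
        (2 * N₀ + 2 * ρstar * (c - 2 * s) * Real.pi * βK * P / (α - 2)))
      (nhds 0) (nhds A) := by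
    have hcont : ContinuousAt
        (fun s : ℝ => s + (c - 2 * s) * (1 - ρstar) * N₀ /
          (2 * N₀ + 2 * ρstar * (c - 2 * s) * Real.pi * βK * P / (α - 2))) 0 := by
      apply ContinuousAt.add continuousAt_id
      apply ContinuousAt.div (by fun_prop) (by fun_prop)
      simp only [mul_zero, sub_zero]
      have : 2 * N₀ + 2 * ρstar * c * Real.pi * βK * P / (α - 2) = D := rfl
      rw [this]
      exact hD.ne'
    have := hcont.tendsto
    simpa [hAdef, hDdef] using this
  have hf : Tendsto (fun r : ℝ =>
      r ^ (2 - α) + (α * r₀ ^ (2 - α) - 2 * r ^ (2 - α)) * (1 - ρstar) * N₀ /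
        (2 * N₀ + 2 * ρstar * (α * r₀ ^ (2 - α) - 2 * r ^ (2 - α)) *
          Real.pi * βK * P / (α - 2))) atTop (nhds A) := by
    have := hg.comp ht
    simpa [Function.comp_def, ← hcdef, mul_comm, mul_left_comm, mul_assoc] using this
  -- compose with rpow
  have hrpow : ContinuousAt (fun x : ℝ => x ^ (-(α - 2)⁻¹)) A :=
    Real.continuousAt_rpow_const A _ (Or.inl hA.ne')
  have hmain := hrpow.tendsto.comp hf
  have hAL : A ^ (-(α - 2)⁻¹) = L := by
    have hinv : A⁻¹ = (2 * N₀ * (α - 2) + 2 * α * r₀ ^ (2 - α) * ρstar * Real.pi * βK * P) /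
        (α * r₀ ^ (2 - α) * N₀ * (1 - ρstar) * (α - 2)) := by
      rw [hAdef, hDdef, hcdef]
      field_simp
    rw [Real.rpow_neg hA.le, ← Real.inv_rpow hA.le, hinv, hL]
  rw [← hAL]
  exact hmain
end

section
/- Let d₀ > 0 and c > 0 be reals, and let r₁ > 2d₀ be a real satisfying (r₁ − 2d₀)²·r₁² = c·(r₁ − d₀). Then c^{1/3} ≤ r₁ ≤ c^{1/3} + 2d₀. -/
/-- If `d₀ > 0`, `c > 0` and `r₁ > 2d₀` satisfies
`(r₁ − 2d₀)²·r₁² = c·(r₁ − d₀)`, then `c^(1/3) ≤ r₁ ≤ c^(1/3) + 2d₀`. -/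
theorem stmt_11 (d₀ c r₁ : ℝ) (hd : 0 < d₀) (hc : 0 < c) (hr : 2 * d₀ < r₁)
    (heq : (r₁ - 2 * d₀) ^ 2 * r₁ ^ 2 = c * (r₁ - d₀)) :
    c ^ ((1 : ℝ) / 3) ≤ r₁ ∧ r₁ ≤ c ^ ((1 : ℝ) / 3) + 2 * d₀ := by
  have hr0 : 0 < r₁ := lt_trans (by nlinarith) hr
  have hx : (0:ℝ) ≤ r₁ - 2 * d₀ := by linarith
  have hd1 : (0:ℝ) < r₁ - d₀ := by linarith
  have h1 : c ≤ r₁ ^ 3 := by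
    nlinarith [mul_pos (mul_pos hr0 hr0) hd, mul_pos hd hr0, sq_nonneg r₁, hd1]
  have h2 : (r₁ - 2 * d₀) ^ 3 ≤ c := by
    nlinarith [sq_nonneg (r₁ - 2 * d₀), mul_pos hd hr0, hd1, mul_nonneg (sq_nonneg (r₁ - 2*d₀)) (mul_pos hd hr0).le]
  have key : ∀ x : ℝ, 0 ≤ x → (x ^ 3) ^ ((1:ℝ)/3) = x := by
    intro x hx
    rw [← Real.rpow_natCast x 3, ← Real.rpow_mul hx]
    norm_num
  constructor
  · calc c ^ ((1:ℝ)/3) ≤ (r₁ ^ 3) ^ ((1:ℝ)/3) :=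
          Real.rpow_le_rpow hc.le h1 (by norm_num)
    _ = r₁ := key r₁ hr0.le
  · have : ((r₁ - 2*d₀) ^ 3) ^ ((1:ℝ)/3) ≤ c ^ ((1:ℝ)/3) :=
      Real.rpow_le_rpow (by positivity) h2 (by norm_num)
    rw [key _ hx] at this
    linarith
end

section
/- Let d₀ > 0, r > 0, β_N > 0, N > 0 and z be reals with N = β_N·r², and set c = 4·d₀·r²·N^{z}. Suppose r₁ > 2d₀ satisfies (r₁ − 2d₀)²·r₁² = c·(r₁ − d₀), and assume c^{1/3} ≥ 2d₀. Then the diagonal-block size N_{d,1} = β_N(r₁ − 2d₀)² and the number of blocks m₁ = r²/r₁² satisfy: β_N·(c^{1/3} − 2d₀)² ≤ N_{d,1} ≤ (4·d₀·β_N^{1/2}·N^{1+z})^{2/3} and r²/(c^{1/3} + 2d₀)² ≤ m₁ ≤ (4d₀)^{−2/3}·β_N^{−1/3}·N^{(1−2z)/3}. -/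
/-- With `N = β_N·r²`, `c = 4d₀r²N^z`, `r₁ > 2d₀` the solution of
`(r₁ − 2d₀)²·r₁² = c·(r₁ − d₀)`, and `c^(1/3) ≥ 2d₀`, the diagonal-block size
`N_{d,1} = β_N(r₁ − 2d₀)²` and the number of blocks `m₁ = r²/r₁²` satisfy
`β_N·(c^(1/3) − 2d₀)² ≤ N_{d,1} ≤ (4d₀·β_N^(1/2)·N^(1+z))^(2/3)` and
`r²/(c^(1/3) + 2d₀)² ≤ m₁ ≤ (4d₀)^(−2/3)·β_N^(−1/3)·N^((1−2z)/3)`. -/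
theorem stmt_12 (d₀ r βN N z c r₁ : ℝ)
    (hd : 0 < d₀) (hr : 0 < r) (hβ : 0 < βN) (hN : 0 < N)
    (hNe : N = βN * r ^ 2)
    (hc : c = 4 * d₀ * r ^ 2 * N ^ z)
    (hr₁ : 2 * d₀ < r₁)
    (heq : (r₁ - 2 * d₀) ^ 2 * r₁ ^ 2 = c * (r₁ - d₀))
    (hcd : 2 * d₀ ≤ c ^ ((1 : ℝ) / 3)) :
    βN * (c ^ ((1 : ℝ) / 3) - 2 * d₀) ^ 2 ≤ βN * (r₁ - 2 * d₀) ^ 2 ∧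
    βN * (r₁ - 2 * d₀) ^ 2 ≤ (4 * d₀ * βN ^ ((1 : ℝ) / 2) * N ^ (1 + z)) ^ ((2 : ℝ) / 3) ∧
    r ^ 2 / (c ^ ((1 : ℝ) / 3) + 2 * d₀) ^ 2 ≤ r ^ 2 / r₁ ^ 2 ∧
    r ^ 2 / r₁ ^ 2 ≤ (4 * d₀) ^ (-(2 : ℝ) / 3) * βN ^ (-(1 : ℝ) / 3) * N ^ ((1 - 2 * z) / 3) := by
  have hcpos : 0 < c := by
    rw [hc]; have := Real.rpow_pos_of_pos hN z; positivity
  have hr₁0 : 0 < r₁ := by linarith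
  have ha : 0 < r₁ - 2 * d₀ := by linarith
  have hrd : 0 < r₁ - d₀ := by linarith
  have h1 : c ≤ r₁ ^ 3 := by
    have hid : r₁ ^ 3 * (r₁ - d₀) - c * (r₁ - d₀) = r₁ ^ 2 * (d₀ * (3 * r₁ - 4 * d₀)) := by
      linear_combination heq
    have h : c * (r₁ - d₀) ≤ r₁ ^ 3 * (r₁ - d₀) := by
      nlinarith [mul_nonneg (sq_nonneg r₁) (mul_nonneg hd.le (by linarith : (0:ℝ) ≤ 3 * r₁ - 4 * d₀))]
    exact le_of_mul_le_mul_right h hrd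
  have h2 : (r₁ - 2 * d₀) ^ 3 ≤ c := by
    have hid : c * (r₁ - d₀) - (r₁ - 2 * d₀) ^ 3 * (r₁ - d₀)
        = (r₁ - 2 * d₀) ^ 2 * (d₀ * (3 * r₁ - 2 * d₀)) := by
      linear_combination -heq
    have h : (r₁ - 2 * d₀) ^ 3 * (r₁ - d₀) ≤ c * (r₁ - d₀) := by
      nlinarith [mul_nonneg (sq_nonneg (r₁ - 2*d₀)) (mul_nonneg hd.le (by linarith : (0:ℝ) ≤ 3 * r₁ - 2 * d₀))]
    exact le_of_mul_le_mul_right h hrd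
  have key1 : c ^ ((1 : ℝ) / 3) ≤ r₁ := by
    have h := Real.rpow_le_rpow hcpos.le h1 (by norm_num : (0:ℝ) ≤ 1/3)
    rwa [← Real.rpow_natCast r₁ 3, ← Real.rpow_mul hr₁0.le, show ((3:ℕ):ℝ) * (1/3) = 1 by norm_num,
      Real.rpow_one] at h
  have key2 : r₁ - 2 * d₀ ≤ c ^ ((1 : ℝ) / 3) := by
    have h := Real.rpow_le_rpow (by positivity) h2 (by norm_num : (0:ℝ) ≤ 1/3)
    rwa [← Real.rpow_natCast (r₁ - 2*d₀) 3, ← Real.rpow_mul ha.le,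
      show ((3:ℕ):ℝ) * (1/3) = 1 by norm_num, Real.rpow_one] at h
  have hc23 : c ^ ((2 : ℝ) / 3) = (c ^ ((1 : ℝ) / 3)) ^ 2 := by
    rw [← Real.rpow_natCast (c ^ ((1:ℝ)/3)) 2, ← Real.rpow_mul hcpos.le]
    norm_num
  refine ⟨?_, ?_, ?_, ?_⟩
  · apply mul_le_mul_of_nonneg_left _ hβ.le
    exact pow_le_pow_left₀ (by linarith) (by linarith) 2
  · have hb : βN ^ ((1:ℝ)/2) * βN = βN ^ ((3:ℝ)/2) := by
      have h := Real.rpow_add hβ (1/2) 1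
      rw [Real.rpow_one] at h
      rw [← h]; norm_num
    have e1 : 4 * d₀ * βN ^ ((1:ℝ)/2) * N ^ (1 + z) = βN ^ ((3:ℝ)/2) * c := by
      rw [show (1:ℝ) + z = 1 + z by rfl, Real.rpow_add hN, Real.rpow_one, hc, hNe]
      linear_combination (4 * d₀ * (βN * r ^ 2) ^ z * r ^ 2) * hb
    have e2 : (βN ^ ((3:ℝ)/2) * c) ^ ((2:ℝ)/3) = βN * c ^ ((2:ℝ)/3) := by
      rw [Real.mul_rpow (by positivity) hcpos.le, ← Real.rpow_mul hβ.le]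
      norm_num
    rw [e1, e2]
    apply mul_le_mul_of_nonneg_left _ hβ.le
    rw [hc23]
    exact pow_le_pow_left₀ ha.le key2 2
  · apply div_le_div_of_nonneg_left (by positivity) (by positivity)
    exact pow_le_pow_left₀ hr₁0.le (by linarith) 2
  · have hcr : c ^ ((2:ℝ)/3) = (4*d₀) ^ ((2:ℝ)/3) * r ^ ((4:ℝ)/3) * N ^ (z * (2/3)) := by
      rw [hc, Real.mul_rpow (by positivity) (Real.rpow_pos_of_pos hN z).le,
        Real.mul_rpow (by positivity) (by positivity), ← Real.rpow_mul hN.le]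
      congr 2
      rw [← Real.rpow_natCast r 2, ← Real.rpow_mul hr.le]
      norm_num
    have A : (4*d₀) ^ (-(2:ℝ)/3) * (4*d₀) ^ ((2:ℝ)/3) = 1 := by
      rw [← Real.rpow_add (by positivity)]; norm_num
    have B : N ^ ((1 - 2*z)/3) * N ^ (z * (2/3)) = N ^ ((1:ℝ)/3) := by
      rw [← Real.rpow_add hN]; ring_nf
    have C : N ^ ((1:ℝ)/3) = βN ^ ((1:ℝ)/3) * r ^ ((2:ℝ)/3) := by
      rw [hNe, Real.mul_rpow hβ.le (by positivity)]
      congr 1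
      rw [← Real.rpow_natCast r 2, ← Real.rpow_mul hr.le]
      norm_num
    have D : βN ^ (-(1:ℝ)/3) * βN ^ ((1:ℝ)/3) = 1 := by
      rw [← Real.rpow_add hβ]; norm_num
    have E : r ^ ((4:ℝ)/3) * r ^ ((2:ℝ)/3) = r ^ 2 := by
      rw [← Real.rpow_add hr, ← Real.rpow_natCast r 2]
      norm_num
    have hE4 : (4*d₀) ^ (-(2:ℝ)/3) * βN ^ (-(1:ℝ)/3) * N ^ ((1 - 2*z)/3) = r ^ 2 / c ^ ((2:ℝ)/3) := by
      rw [hcr, eq_div_iff (by positivity)]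
      calc (4*d₀) ^ (-(2:ℝ)/3) * βN ^ (-(1:ℝ)/3) * N ^ ((1 - 2*z)/3) *
            ((4*d₀) ^ ((2:ℝ)/3) * r ^ ((4:ℝ)/3) * N ^ (z * (2/3)))
          = ((4*d₀) ^ (-(2:ℝ)/3) * (4*d₀) ^ ((2:ℝ)/3)) * (βN ^ (-(1:ℝ)/3) *
            (N ^ ((1 - 2*z)/3) * N ^ (z * (2/3)))) * r ^ ((4:ℝ)/3) := by ring
        _ = ((4*d₀) ^ (-(2:ℝ)/3) * (4*d₀) ^ ((2:ℝ)/3)) * ((βN ^ (-(1:ℝ)/3) * βN ^ ((1:ℝ)/3)) *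
            (r ^ ((4:ℝ)/3) * r ^ ((2:ℝ)/3))) := by rw [B, C]; ring
        _ = r ^ 2 := by rw [A, D, E]; ring
    rw [hE4]
    apply div_le_div_of_nonneg_left (by positivity) (by positivity)
    rw [hc23]
    exact pow_le_pow_left₀ (by linarith) key1 2
end

section
/- Let s₁, s₂ be reals. Define f₁(z₁,z₂) = 2 − z₁ − s₁, f₂(z₁,z₂) = (14/9)(1+z₁) − (2/3)z₂ − s₂, f₃(z₁,z₂) = (14/9)(1+z₁) + (4/3)z₂. Then the minimum over (z₁,z₂) ∈ ℝ² of max(f₁, f₂, f₃) equals 42/23 − (14/23)s₁ − (6/23)s₂, and it is attained at z₁ = 4/23 − (9/23)s₁ + (6/23)s₂, z₂ = −s₂/2, where all three functions take this common value. -/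
/-- For `f₁ = 2 − z₁ − s₁`, `f₂ = (14/9)(1+z₁) − (2/3)z₂ − s₂`,
`f₃ = (14/9)(1+z₁) + (4/3)z₂`, the minimum over `(z₁, z₂) ∈ ℝ²` of `max(f₁, f₂, f₃)`
equals `42/23 − (14/23)s₁ − (6/23)s₂`, attained at
`z₁ = 4/23 − (9/23)s₁ + (6/23)s₂`, `z₂ = −s₂/2`, where all three functions take this
common value. -/
theorem stmt_16 (s₁ s₂ : ℝ) :
    (∀ z₁ z₂ : ℝ,
        42 / 23 - (14 / 23) * s₁ - (6 / 23) * s₂ ≤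
          max (2 - z₁ - s₁)
            (max ((14 / 9) * (1 + z₁) - (2 / 3) * z₂ - s₂)
              ((14 / 9) * (1 + z₁) + (4 / 3) * z₂))) ∧
    (2 - (4 / 23 - (9 / 23) * s₁ + (6 / 23) * s₂) - s₁ =
        42 / 23 - (14 / 23) * s₁ - (6 / 23) * s₂) ∧
    ((14 / 9) * (1 + (4 / 23 - (9 / 23) * s₁ + (6 / 23) * s₂)) - (2 / 3) * (-s₂ / 2) - s₂ =
        42 / 23 - (14 / 23) * s₁ - (6 / 23) * s₂) ∧
    ((14 / 9) * (1 + (4 / 23 - (9 / 23) * s₁ + (6 / 23) * s₂)) + (4 / 3) * (-s₂ / 2) =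
        42 / 23 - (14 / 23) * s₁ - (6 / 23) * s₂) := by
  refine ⟨fun z₁ z₂ => ?_, by ring, by ring, by ring⟩
  have h1 := le_max_left (2 - z₁ - s₁)
      (max ((14 / 9) * (1 + z₁) - (2 / 3) * z₂ - s₂) ((14 / 9) * (1 + z₁) + (4 / 3) * z₂))
  have h2 := le_trans (le_max_left ((14 / 9) * (1 + z₁) - (2 / 3) * z₂ - s₂)
      ((14 / 9) * (1 + z₁) + (4 / 3) * z₂)) (le_max_right (2 - z₁ - s₁) _)
  have h3 := le_trans (le_max_right ((14 / 9) * (1 + z₁) - (2 / 3) * z₂ - s₂)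
      ((14 / 9) * (1 + z₁) + (4 / 3) * z₂)) (le_max_right (2 - z₁ - s₁) _)
  linarith
end

section
/- Let s₁, s₂ be reals. Define g₁(z₁,z₂) = 2 − z₁ − s₁, g₂(z₁,z₂) = (16/9)(1+z₁) + (2/3)z₂ − s₂, g₃(z₁,z₂) = (14/9)(1+z₁) − (2/3)z₂ − s₂. Then the minimum over (z₁,z₂) ∈ ℝ² of max(g₁, g₂, g₃) equals 15/8 − (5/8)s₁ − (3/8)s₂, and it is attained at z₁ = 1/8 − (3/8)s₁ + (3/8)s₂, z₂ = −3/16 + (1/16)s₁ − (1/16)s₂, where all three functions take this common value. -/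
/-- For `g₁ = 2 − z₁ − s₁`, `g₂ = (16/9)(1+z₁) + (2/3)z₂ − s₂`,
`g₃ = (14/9)(1+z₁) − (2/3)z₂ − s₂`, the minimum over `(z₁, z₂) ∈ ℝ²` of
`max(g₁, g₂, g₃)` equals `15/8 − (5/8)s₁ − (3/8)s₂`, attained at
`z₁ = 1/8 − (3/8)s₁ + (3/8)s₂`, `z₂ = −3/16 + (1/16)s₁ − (1/16)s₂`, where all three
functions take this common value. -/
theorem stmt_17 (s₁ s₂ : ℝ) :
    (∀ z₁ z₂ : ℝ,
        15 / 8 - (5 / 8) * s₁ - (3 / 8) * s₂ ≤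
          max (2 - z₁ - s₁)
            (max ((16 / 9) * (1 + z₁) + (2 / 3) * z₂ - s₂)
              ((14 / 9) * (1 + z₁) - (2 / 3) * z₂ - s₂))) ∧
    (2 - (1 / 8 - (3 / 8) * s₁ + (3 / 8) * s₂) - s₁ =
        15 / 8 - (5 / 8) * s₁ - (3 / 8) * s₂) ∧
    ((16 / 9) * (1 + (1 / 8 - (3 / 8) * s₁ + (3 / 8) * s₂)) +
          (2 / 3) * (-3 / 16 + (1 / 16) * s₁ - (1 / 16) * s₂) - s₂ =
        15 / 8 - (5 / 8) * s₁ - (3 / 8) * s₂) ∧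
    ((14 / 9) * (1 + (1 / 8 - (3 / 8) * s₁ + (3 / 8) * s₂)) -
          (2 / 3) * (-3 / 16 + (1 / 16) * s₁ - (1 / 16) * s₂) - s₂ =
        15 / 8 - (5 / 8) * s₁ - (3 / 8) * s₂) := by
  refine ⟨?_, by ring, by ring, by ring⟩
  intro z₁ z₂
  set M := max (2 - z₁ - s₁)
      (max ((16 / 9) * (1 + z₁) + (2 / 3) * z₂ - s₂)
        ((14 / 9) * (1 + z₁) - (2 / 3) * z₂ - s₂)) with hM
  have h1 : 2 - z₁ - s₁ ≤ M := le_max_left _ _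
  have h2 : (16 / 9) * (1 + z₁) + (2 / 3) * z₂ - s₂ ≤ M :=
    le_trans (le_max_left _ _) (le_max_right _ _)
  have h3 : (14 / 9) * (1 + z₁) - (2 / 3) * z₂ - s₂ ≤ M :=
    le_trans (le_max_right _ _) (le_max_right _ _)
  linarith
end

section
/- Let s₁ be a real. Define h₁(z₁,z₂) = 2 − z₁ − s₁, h₂(z₁,z₂) = 1 + (8/9)(1+z₁) − (2/3)z₂ − s₁, h₃(z₁,z₂) = 1 + (10/9)(1+z₁) + (2/3)z₂ − s₁. Then the minimum over (z₁,z₂) ∈ ℝ² of max(h₁, h₂, h₃) equals 2 − s₁, and it is attained at z₁ = 0, z₂ = −1/6, where all three functions take this common value. -/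
/-- For `h₁ = 2 − z₁ − s₁`, `h₂ = 1 + (8/9)(1+z₁) − (2/3)z₂ − s₁`,
`h₃ = 1 + (10/9)(1+z₁) + (2/3)z₂ − s₁`, the minimum over `(z₁, z₂) ∈ ℝ²` of
`max(h₁, h₂, h₃)` equals `2 − s₁`, attained at `z₁ = 0`, `z₂ = −1/6`, where all three
functions take this common value. -/
theorem stmt_18 (s₁ : ℝ) :
    (∀ z₁ z₂ : ℝ,
        2 - s₁ ≤
          max (2 - z₁ - s₁)
            (max (1 + (8 / 9) * (1 + z₁) - (2 / 3) * z₂ - s₁)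
              (1 + (10 / 9) * (1 + z₁) + (2 / 3) * z₂ - s₁))) ∧
    (2 - (0 : ℝ) - s₁ = 2 - s₁) ∧
    (1 + (8 / 9) * (1 + (0 : ℝ)) - (2 / 3) * (-1 / 6 : ℝ) - s₁ = 2 - s₁) ∧
    (1 + (10 / 9) * (1 + (0 : ℝ)) + (2 / 3) * (-1 / 6 : ℝ) - s₁ = 2 - s₁) := by
  refine ⟨fun z₁ z₂ => ?_, by ring, by ring, by ring⟩
  rcases le_total z₁ 0 with h | h
  · exact le_trans (by linarith) (le_max_left _ _)
  · rcases le_total ((2:ℝ)/3 * z₂) (8/9 * (1 + z₁) - 1) with h2 | h2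
    · exact le_trans (by linarith) (le_trans (le_max_left _ _) (le_max_right _ _))
    · exact le_trans (by linarith) (le_trans (le_max_right _ _) (le_max_right _ _))
end
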